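/- arXiv:1401.6383 — 6 statements merged into one kernel-verified Lean document; each statement's English description precedes it below -/
import Mathlib

section
/- Let X be a nonnegative integrable random variable, and for K ≥ 0 let V(K) = E[(X - K)^+]. Then the right derivative of V at K satisfies ∂⁺V(K) = -Q(X > K) for every K ≥ 0, and the left derivative satisfies ∂⁻V(K) = -Q(X ≥ K) for every K > 0. -/
open MeasureTheory Filter Set

private lemma aux_deriv {Ω : Type*} [MeasurableSpace Ω] (Q : Measure Ω) [IsProbabilityMeasure Q]
    (X : Ω → ℝ) (hXm : Measurable X) (hXint : Integrable X Q) (K : ℝ) (s : Set ℝ)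
    (A : Set Ω) (hA : MeasurableSet A)
    (hpt : ∀ ω, Tendsto (fun K' => (max (X ω - K') 0 - max (X ω - K) 0) / (K' - K))
      (nhdsWithin K (s \ {K})) (nhds (A.indicator (fun _ => (-1 : ℝ)) ω))) :
    HasDerivWithinAt (fun K => ∫ ω, max (X ω - K) 0 ∂Q) (-(Q A).toReal) s K := by
  have hint : ∀ K' : ℝ, Integrable (fun ω => max (X ω - K') 0) Q :=
    fun K' => (hXint.sub (integrable_const K')).pos_part
  rw [hasDerivWithinAt_iff_tendsto_slope]
  have hslope : slope (fun K => ∫ ω, max (X ω - K) 0 ∂Q) K =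
      fun K' => ∫ ω, (max (X ω - K') 0 - max (X ω - K) 0) / (K' - K) ∂Q := by
    funext K'
    rw [slope_def_field, ← integral_sub (hint K') (hint K), ← integral_div]
  rw [hslope]
  have hlim : -(Q A).toReal = ∫ ω, A.indicator (fun _ => (-1 : ℝ)) ω ∂Q := by
    rw [integral_indicator_const _ hA]; simp; rfl
  rw [hlim]
  apply tendsto_integral_filter_of_dominated_convergence (fun _ => (1 : ℝ))
  · refine Eventually.of_forall fun K' => ?_
    simp only [div_eq_mul_inv]
    exact (((hint K').sub (hint K)).aestronglyMeasurable).mul_const _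
  · filter_upwards [eventually_mem_nhdsWithin] with K' hK'
    refine ae_of_all _ fun ω => ?_
    have hne : K' - K ≠ 0 := sub_ne_zero.2 hK'.2
    rw [Real.norm_eq_abs, abs_div]
    rw [div_le_one (abs_pos.2 hne)]
    calc |max (X ω - K') 0 - max (X ω - K) 0| ≤ |(X ω - K') - (X ω - K)| :=
          abs_max_sub_max_le_abs _ _ _
      _ = |K' - K| := by rw [show (X ω - K') - (X ω - K) = -(K' - K) by ring, abs_neg]
  · exact integrable_const 1
  · exact ae_of_all _ hpt

theorem stmt3 {Ω : Type*} [MeasurableSpace Ω] (Q : Measure Ω) [IsProbabilityMeasure Q]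
    (X : Ω → ℝ) (hXm : Measurable X) (hXpos : ∀ ω, 0 ≤ X ω) (hXint : Integrable X Q) :
    (∀ K : ℝ, 0 ≤ K → HasDerivWithinAt (fun K => ∫ ω, max (X ω - K) 0 ∂Q)
        (-(Q {ω | K < X ω}).toReal) (Set.Ici K) K) ∧
    (∀ K : ℝ, 0 < K → HasDerivWithinAt (fun K => ∫ ω, max (X ω - K) 0 ∂Q)
        (-(Q {ω | K ≤ X ω}).toReal) (Set.Iic K) K) := by
  constructor
  · intro K hK
    apply aux_deriv Q X hXm hXint K _ _ (measurableSet_lt measurable_const hXm)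
    intro ω
    have hset : Ici K \ {K} = Ioi K := by
      ext x; simp [lt_iff_le_and_ne, eq_comm, and_comm]
    rw [hset]
    by_cases hω : K < X ω
    · have hind : ({ω | K < X ω}).indicator (fun _ => (-1 : ℝ)) ω = -1 := by
        simp [indicator_of_mem, hω]
      rw [hind]
      apply Tendsto.congr' _ tendsto_const_nhds
      have h1 : ∀ᶠ K' in nhdsWithin K (Ioi K), K' < X ω :=
        eventually_nhdsWithin_of_eventually_nhds (Filter.Tendsto.eventually_lt_const hω tendsto_id)
      filter_upwards [h1, eventually_mem_nhdsWithin] with K' h1 h2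
      have hK'K : K < K' := h2
      rw [max_eq_left (by linarith), max_eq_left (by linarith),
        show (X ω - K') - (X ω - K) = -(K' - K) by ring, neg_div,
        div_self (sub_ne_zero.2 (ne_of_gt hK'K))]
    · have hind : ({ω | K < X ω}).indicator (fun _ => (-1 : ℝ)) ω = 0 := by
        simp [indicator_of_notMem, hω]
      rw [hind]
      apply Tendsto.congr' _ tendsto_const_nhds
      filter_upwards [eventually_mem_nhdsWithin] with K' h2
      have hK'K : K < K' := h2
      push_neg at hω
      rw [max_eq_right (by linarith), max_eq_right (by linarith)]
      simp
  · intro K hK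
    apply aux_deriv Q X hXm hXint K _ _ (measurableSet_le measurable_const hXm)
    intro ω
    have hset : Iic K \ {K} = Iio K := by
      ext x; simp [lt_iff_le_and_ne, and_comm]
    rw [hset]
    by_cases hω : K ≤ X ω
    · have hind : ({ω | K ≤ X ω}).indicator (fun _ => (-1 : ℝ)) ω = -1 := by
        simp [indicator_of_mem, hω]
      rw [hind]
      apply Tendsto.congr' _ tendsto_const_nhds
      filter_upwards [eventually_mem_nhdsWithin] with K' h2
      have hK'K : K' < K := h2
      rw [max_eq_left (by linarith), max_eq_left (by linarith),
        show (X ω - K') - (X ω - K) = -(K' - K) by ring, neg_div,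
        div_self (sub_ne_zero.2 (ne_of_lt hK'K))]
    · have hind : ({ω | K ≤ X ω}).indicator (fun _ => (-1 : ℝ)) ω = 0 := by
        simp [indicator_of_notMem, hω]
      rw [hind]
      apply Tendsto.congr' _ tendsto_const_nhds
      push_neg at hω
      have h1 : ∀ᶠ K' in nhdsWithin K (Iio K), X ω < K' :=
        eventually_nhdsWithin_of_eventually_nhds (Filter.Tendsto.eventually_const_lt hω tendsto_id)
      filter_upwards [h1] with K' h1
      rw [max_eq_right (by linarith), max_eq_right (by linarith)]
      simp
end

section
/- Let S and M be nonnegative random variables with S integrable and Q(S = 0) = 0. Define the barrier option value V(H, K) = E[1_{M ≥ H} (S - K)^+]. Then the right derivative in K at K = 0 satisfies lim_{K→0⁺} (V(H,K) - V(H,0))/K = -Q(M ≥ H) for every H > 0. -/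
open MeasureTheory Filter Set Topology

private lemma max_sub_aux (s K : ℝ) (hs : 0 ≤ s) :
    max (s - K) 0 - max (s - 0) 0 = -(min s K) := by
  rcases le_total s K with h | h
  · rw [min_eq_left h, max_eq_right (by linarith), sub_zero, max_eq_left hs]; ring
  · rw [min_eq_right h, max_eq_left (by linarith), sub_zero, max_eq_left hs]; ring

theorem stmt5 {Ω : Type*} [MeasurableSpace Ω] (Q : Measure Ω) [IsProbabilityMeasure Q]
    (S M : Ω → ℝ) (hSm : Measurable S) (hMm : Measurable M)
    (hSpos : ∀ ω, 0 ≤ S ω) (hMpos : ∀ ω, 0 ≤ M ω)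
    (hSint : Integrable S Q) (hS0 : Q {ω | S ω = 0} = 0) :
    ∀ H : ℝ, 0 < H →
      Tendsto (fun K =>
          ((∫ ω in {ω | H ≤ M ω}, max (S ω - K) 0 ∂Q) -
            ∫ ω in {ω | H ≤ M ω}, max (S ω - 0) 0 ∂Q) / K)
        (𝓝[>] (0:ℝ)) (𝓝 (-(Q {ω | H ≤ M ω}).toReal)) := by
  intro H hH
  set A : Set Ω := {ω | H ≤ M ω} with hA
  have hAm : MeasurableSet A := measurableSet_le measurable_const hMm
  have hμ := Q.restrict A
  -- integrability facts
  have hmaxint : ∀ K : ℝ, 0 ≤ K →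
      Integrable (fun ω => max (S ω - K) 0) (Q.restrict A) := by
    intro K hK
    refine (hSint.restrict.mono' ?_ ?_)
    · exact ((hSm.sub measurable_const).max measurable_const).aestronglyMeasurable
    · filter_upwards with ω
      have := hSpos ω
      rw [Real.norm_eq_abs, abs_of_nonneg (le_max_right _ _)]
      exact max_le (by linarith) this
  have hminint : ∀ K : ℝ, 0 ≤ K →
      Integrable (fun ω => min (S ω) K) (Q.restrict A) := by
    intro K hK
    refine ((integrable_const K).restrict.mono' ?_ ?_)
    · exact (hSm.min measurable_const).aestronglyMeasurable
    · filter_upwards with ω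
      have := hSpos ω
      rw [Real.norm_eq_abs, abs_of_nonneg (le_min this hK)]
      exact min_le_right _ _
  -- dominated convergence for K ↦ ∫_A min (S ω) K / K
  have hS0' : Q.restrict A {ω | S ω = 0} = 0 :=
    le_antisymm ((Measure.restrict_apply_le _ _).trans hS0.le) zero_le
  have hDC : Tendsto (fun K : ℝ => ∫ ω in A, min (S ω) K / K ∂Q)
      (𝓝[>] (0:ℝ)) (𝓝 (∫ _ω in A, (1:ℝ) ∂Q)) := by
    refine tendsto_integral_filter_of_dominated_convergence (fun _ => (1:ℝ))
      ?_ ?_ (integrable_const 1) ?_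
    · filter_upwards with K
      exact ((hSm.min measurable_const).div_const K).aestronglyMeasurable
    · filter_upwards [self_mem_nhdsWithin] with K (hK : 0 < K)
      filter_upwards with ω
      have hs := hSpos ω
      rw [Real.norm_eq_abs, abs_of_nonneg (div_nonneg (le_min hs hK.le) hK.le)]
      rw [div_le_one hK]
      exact min_le_right _ _
    · have hae : ∀ᵐ ω ∂(Q.restrict A), S ω ≠ 0 := by
        rw [ae_iff]
        simpa using hS0'
      filter_upwards [hae] with ω hω
      have hs : 0 < S ω := lt_of_le_of_ne (hSpos ω) (Ne.symm hω)
      refine tendsto_const_nhds.congr' ?_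
      filter_upwards [Ioo_mem_nhdsGT_of_mem (by simp [hs] : (0:ℝ) ∈ Ico 0 (S ω))]
        with K hK
      rw [min_eq_right hK.2.le, div_self hK.1.ne']
  have hconst : (∫ _ω in A, (1:ℝ) ∂Q) = (Q A).toReal := by
    simp [Measure.restrict_apply_univ, Measure.real]
  rw [hconst] at hDC
  refine (hDC.neg).congr' ?_
  filter_upwards [self_mem_nhdsWithin] with K (hK : 0 < K)
  have heq : (∫ ω in A, max (S ω - K) 0 ∂Q) - ∫ ω in A, max (S ω - 0) 0 ∂Q
      = -∫ ω in A, min (S ω) K ∂Q := by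
    rw [← integral_sub (hmaxint K hK.le) (hmaxint 0 le_rfl), ← integral_neg]
    exact integral_congr_ae (Filter.Eventually.of_forall fun ω => by
      simpa using max_sub_aux (S ω) K (hSpos ω))
  rw [heq, neg_div, integral_div]
end

section
/- Let S and M be nonnegative random variables with S and M integrable and Q(S = 0) = 0. Then the lookback price E[(M - K)^+] equals -∫_K^∞ [lim_{k→0⁺} (E[1_{M ≥ H}(S-k)^+] - E[1_{M ≥ H} S])/k] dH for every K ≥ 0; i.e., E[(M-K)^+] = ∫_K^∞ Q(M ≥ H) dH where Q(M ≥ H) = -∂⁺_k|_{k=0} E[1_{M≥H}(S-k)^+]. -/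
open MeasureTheory Filter Set Topology

theorem stmt6 {Ω : Type*} [MeasurableSpace Ω] (Q : Measure Ω) [IsProbabilityMeasure Q]
    (S M : Ω → ℝ) (hSm : Measurable S) (hMm : Measurable M)
    (hSpos : ∀ ω, 0 ≤ S ω) (hMpos : ∀ ω, 0 ≤ M ω)
    (hSint : Integrable S Q) (hMint : Integrable M Q) (hS0 : Q {ω | S ω = 0} = 0) :
    ∀ K : ℝ, 0 ≤ K →
      (∀ H : ℝ, 0 < H →
        Tendsto (fun k =>
            ((∫ ω in {ω | H ≤ M ω}, max (S ω - k) 0 ∂Q) -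
              ∫ ω in {ω | H ≤ M ω}, S ω ∂Q) / k)
          (𝓝[>] (0:ℝ)) (𝓝 (-(Q {ω | H ≤ M ω}).toReal))) ∧
      ∫ ω, max (M ω - K) 0 ∂Q = ∫ H in Set.Ioi K, (Q {ω | H ≤ M ω}).toReal := by
  intro K hK
  constructor
  · intro H hH
    set A : Set Ω := {ω | H ≤ M ω} with hA
    have hAmeas : MeasurableSet A := hMm measurableSet_Ici
    -- the key tendsto: ∫_A min(S,k)/k → (Q A).toReal
    have key : Tendsto (fun k => ∫ ω in A, min (S ω) k / k ∂Q) (𝓝[>] (0:ℝ))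
        (𝓝 ((Q A).toReal)) := by
      have h1 : ((Q A).toReal : ℝ) = ∫ _ω in A, (1 : ℝ) ∂Q := by
        simp [Measure.restrict_apply_univ]; rfl
      rw [h1]
      apply tendsto_integral_filter_of_dominated_convergence (fun _ => (1 : ℝ))
      · filter_upwards with k
        exact ((hSm.min measurable_const).div_const k).aestronglyMeasurable
      · filter_upwards [self_mem_nhdsWithin] with k (hk : 0 < k)
        filter_upwards with ω
        have h0 : 0 ≤ min (S ω) k := le_min (hSpos ω) hk.le
        have h2 : min (S ω) k ≤ k := min_le_right _ _
        rw [Real.norm_eq_abs, abs_of_nonneg (div_nonneg h0 hk.le)]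
        rw [div_le_one hk]
        exact h2
      · exact (integrable_const 1)
      · have hae : ∀ᵐ ω ∂(Q.restrict A), S ω ≠ 0 :=
          ae_restrict_of_ae (by
            rw [ae_iff]
            convert hS0 using 2
            ext ω; simp)
        filter_upwards [hae] with ω hω
        have hSω : 0 < S ω := lt_of_le_of_ne (hSpos ω) (Ne.symm hω)
        apply Tendsto.congr' _ tendsto_const_nhds
        filter_upwards [Ioo_mem_nhdsGT_of_mem (by constructor <;> simp [hSω] : (0:ℝ) ∈ Ico 0 (S ω))] with k hk
        rw [min_eq_right hk.2.le, div_self hk.1.ne']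
    have key2 : Tendsto (fun k => -∫ ω in A, min (S ω) k / k ∂Q) (𝓝[>] (0:ℝ))
        (𝓝 (-(Q A).toReal)) := key.neg
    apply Tendsto.congr' _ key2
    filter_upwards [self_mem_nhdsWithin] with k (hk : 0 < k)
    have hSk : Integrable (fun ω => max (S ω - k) 0) (Q.restrict A) :=
      (hSint.restrict.sub (integrable_const k)).pos_part
    have hSr : Integrable S (Q.restrict A) := hSint.restrict
    rw [← integral_sub hSk hSr, ← integral_div, ← integral_neg]
    refine integral_congr_ae (Eventually.of_forall fun ω => ?_)
    have : max (S ω - k) 0 - S ω = -(min (S ω) k) := by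
      rcases le_total (S ω) k with h | h
      · rw [min_eq_left h, max_eq_right (by linarith)]; ring
      · rw [min_eq_right h, max_eq_left (by linarith)]; ring
    simp only [this]; ring
  · -- layer cake part
    have hint : Integrable (fun ω => max (M ω - K) 0) Q :=
      (hMint.sub (integrable_const K)).pos_part
    have hnn : 0 ≤ᵐ[Q] fun ω => max (M ω - K) 0 :=
      Eventually.of_forall fun ω => le_max_right _ _
    rw [hint.integral_eq_integral_meas_le hnn]
    have hcongr : ∀ t ∈ Set.Ioi (0:ℝ),
        (Q {ω | t ≤ max (M ω - K) 0}).toReal = (Q {ω | t + K ≤ M ω}).toReal := by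
      intro t ht
      congr 1
      apply congrArg
      ext ω
      simp only [mem_setOf_eq, le_max_iff]
      constructor
      · rintro (h | h)
        · linarith
        · exact absurd h (not_le.mpr ht)
      · intro h; left; linarith
    simp only [Measure.real]
    rw [setIntegral_congr_fun measurableSet_Ioi hcongr]
    have hmp : MeasurePreserving (fun t : ℝ => t + K) volume volume :=
      measurePreserving_add_right volume K
    have hemb : MeasurableEmbedding (fun t : ℝ => t + K) :=
      (Homeomorph.addRight K).measurableEmbedding
    have := hmp.setIntegral_preimage_emb hemb
      (fun H => (Q {ω | H ≤ M ω}).toReal) (Set.Ioi K)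
    have hpre : (fun t : ℝ => t + K) ⁻¹' Set.Ioi K = Set.Ioi 0 := by
      ext t; simp
    rw [hpre] at this
    exact this
end

section
/- Let X be a nonnegative random variable, Y integrable, and let f be continuous on [α, β] and continuously differentiable on (α, β) with 0 ≤ α < β < ∞. Set g(x) = f(x)·1_{[α,β]}(x). Then E[g(X)Y] = f(α)E[1_{X ≥ α} Y] - f(β)E[1_{X > β} Y] + ∫_α^β f'(a) E[1_{X > a} Y] da. -/
open MeasureTheory Filter Set

lemma core {Ω : Type*} [MeasurableSpace Ω] (Q : Measure Ω) [IsProbabilityMeasure Q]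
    (X Y : Ω → ℝ) (hXm : Measurable X) (hY : Integrable Y Q)
    (α β : ℝ) (f f' : ℝ → ℝ) (hfc : ContinuousOn f (Set.Icc α β))
    (hfd : ∀ x ∈ Set.Ioo α β, HasDerivAt f (f' x) x)
    (hf'c : ContinuousOn f' (Set.Ioo α β))
    (hgint : Integrable (fun ω => Set.indicator (Set.Icc α β) f (X ω) * Y ω) Q)
    (hf'int : IntegrableOn (fun a => f' a * ∫ ω in {ω | a < X ω}, Y ω ∂Q) (Set.Ioo α β))
    (u v : ℝ) (hαu : α < u) (huv : u < v) (hvβ : v < β) :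
    ∫ ω, Set.indicator (Set.Icc u v) f (X ω) * Y ω ∂Q =
      f u * (∫ ω in {ω | u ≤ X ω}, Y ω ∂Q) - f v * (∫ ω in {ω | v < X ω}, Y ω ∂Q) +
        ∫ a in Set.Ioo u v, f' a * ∫ ω in {ω | a < X ω}, Y ω ∂Q := by
  have huv' : u ≤ v := le_of_lt huv
  have hIccIoo : Icc u v ⊆ Ioo α β := fun x hx => ⟨lt_of_lt_of_le hαu hx.1, lt_of_le_of_lt hx.2 hvβ⟩
  have hIccsub : Icc u v ⊆ Icc α β := hIccIoo.trans Ioo_subset_Icc_self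
  set F : ℝ → ℝ := fun a => ∫ ω in {ω | a < X ω}, Y ω ∂Q with hFdef
  set T : ℝ → Ω → ℝ := fun a ω => if a < X ω ∧ X ω ≤ v then Y ω else 0 with hTdef
  -- FTC
  have hftc : ∀ x ∈ Icc u v, (∫ a in Ioo u x, f' a) = f x - f u := by
    intro x hx
    rw [← integral_Ioc_eq_integral_Ioo, ← intervalIntegral.integral_of_le hx.1]
    apply intervalIntegral.integral_eq_sub_of_hasDeriv_right_of_le hx.1
    · exact hfc.mono ((Icc_subset_Icc_right hx.2).trans hIccsub)
    · intro y hy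
      exact (hfd y (hIccIoo ⟨le_of_lt hy.1, le_trans (le_of_lt hy.2) hx.2⟩)).hasDerivWithinAt
    · apply ContinuousOn.intervalIntegrable
      apply hf'c.mono
      rw [uIcc_of_le hx.1]
      exact ((Icc_subset_Icc_right hx.2).trans hIccIoo)
  -- pointwise identity
  have hpt : ∀ ω, Set.indicator (Set.Icc u v) f (X ω) * Y ω
      = Set.indicator (X ⁻¹' Icc u v) (fun ω' => f u * Y ω') ω
        + ∫ a in Ioo u v, f' a * T a ω := by
    intro ω
    have h1 : ∀ a, f' a * T a ω = (if a < X ω ∧ X ω ≤ v then f' a else 0) * Y ω := by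
      intro a; by_cases h : a < X ω ∧ X ω ≤ v <;> simp [hTdef, h]
    simp only [h1, integral_mul_const]
    by_cases hx : X ω ∈ Icc u v
    · have hxv : X ω ≤ v := hx.2
      have h2 : (fun a => if a < X ω ∧ X ω ≤ v then f' a else 0)
          = (Iio (X ω)).indicator f' := by
        funext a; by_cases h : a < X ω <;> simp [h, hxv, Set.indicator_apply]
      rw [h2, setIntegral_indicator measurableSet_Iio]
      have h3 : Ioo u v ∩ Iio (X ω) = Ioo u (X ω) := by
        ext a
        simp only [mem_inter_iff, mem_Ioo, mem_Iio]
        exact ⟨fun h => ⟨h.1.1, h.2⟩, fun h => ⟨⟨h.1, lt_of_lt_of_le h.2 hxv⟩, h.2⟩⟩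
      rw [h3, hftc _ hx, Set.indicator_of_mem hx,
        Set.indicator_of_mem (show ω ∈ X ⁻¹' Icc u v from hx)]
      ring
    · have h4 : EqOn (fun a => (if a < X ω ∧ X ω ≤ v then f' a else 0)) (fun _ => (0:ℝ))
          (Ioo u v) := by
        intro a ha
        rcases not_and_or.mp (fun h : X ω ∈ Icc u v => hx h) with h | h
        · push_neg at h
          have hn : ¬ (a < X ω ∧ X ω ≤ v) :=
            fun hc => absurd (lt_trans hc.1 h) (not_lt.mpr (le_of_lt ha.1))
          simp [hn]
        · push_neg at h
          have hn : ¬ (a < X ω ∧ X ω ≤ v) := fun hc => absurd hc.2 (not_le.mpr h)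
          simp [hn]
      rw [setIntegral_congr_fun measurableSet_Ioo h4]
      simp [Set.indicator_of_notMem hx, Set.indicator_of_notMem (show ω ∉ X ⁻¹' Icc u v from hx)]
  -- integrability pieces
  have hmeasIcc : MeasurableSet (X ⁻¹' Icc u v) := hXm measurableSet_Icc
  have hint1 : Integrable ((X ⁻¹' Icc u v).indicator (fun ω => f u * Y ω)) Q :=
    (hY.const_mul (f u)).indicator hmeasIcc
  have hintL : Integrable (fun ω => Set.indicator (Set.Icc u v) f (X ω) * Y ω) Q := by
    have heq : (fun ω => Set.indicator (Set.Icc u v) f (X ω) * Y ω)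
        = (X ⁻¹' Icc u v).indicator (fun ω => Set.indicator (Set.Icc α β) f (X ω) * Y ω) := by
      funext ω; by_cases h : X ω ∈ Icc u v
      · simp [Set.indicator_of_mem h, Set.indicator_of_mem (hIccsub h),
          Set.indicator_of_mem (show ω ∈ X ⁻¹' Icc u v from h)]
      · simp [Set.indicator_of_notMem h, Set.indicator_of_notMem (show ω ∉ X ⁻¹' Icc u v from h)]
    rw [heq]; exact hgint.indicator hmeasIcc
  have hint2 : Integrable (fun ω => ∫ a in Ioo u v, f' a * T a ω) Q := by
    apply (hintL.sub hint1).congr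
    refine Filter.Eventually.of_forall fun ω => ?_
    simp only [Pi.sub_apply]
    rw [hpt ω]; ring
  -- product measure
  set μ : Measure ℝ := volume.restrict (Ioo u v) with hμdef
  haveI : IsFiniteMeasure μ := by
    constructor
    rw [hμdef, Measure.restrict_apply_univ]
    simp [Real.volume_Ioo]
  have hTset : MeasurableSet {p : ℝ × Ω | p.1 < X p.2 ∧ X p.2 ≤ v} := by
    apply (measurableSet_lt measurable_fst (hXm.comp measurable_snd)).inter
    exact (hXm.comp measurable_snd) measurableSet_Iic
  have hHm : AEStronglyMeasurable (fun p : ℝ × Ω => f' p.1 * T p.1 p.2) (μ.prod Q) := by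
    have h1 : AEStronglyMeasurable f' μ :=
      ((hf'c.mono (Ioo_subset_Ioo (le_of_lt hαu) (le_of_lt hvβ))).aestronglyMeasurable
        measurableSet_Ioo)
    have h2 : AEStronglyMeasurable (fun p : ℝ × Ω => T p.1 p.2) (μ.prod Q) := by
      have heq : (fun p : ℝ × Ω => T p.1 p.2)
          = {p : ℝ × Ω | p.1 < X p.2 ∧ X p.2 ≤ v}.indicator (fun p => Y p.2) := by
        funext p; by_cases h : p.1 < X p.2 ∧ X p.2 ≤ v <;>
          simp [hTdef, h, Set.indicator_apply]
      rw [heq]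
      exact (hY.1.comp_snd).indicator hTset
    exact h1.comp_fst.mul h2
  obtain ⟨C, hC⟩ := (isCompact_Icc (a := u) (b := v)).exists_bound_of_continuousOn
    (hf'c.mono hIccIoo)
  have hHint : Integrable (fun p : ℝ × Ω => f' p.1 * T p.1 p.2) (μ.prod Q) := by
    have hdom : Integrable (fun p : ℝ × Ω => (max C 0) * ‖Y p.2‖) (μ.prod Q) :=
      (integrable_const _).mul_prod hY.norm
    apply hdom.mono' hHm
    have hae : ∀ᵐ p ∂(μ.prod Q), p.1 ∈ Ioo u v := by
      rw [ae_iff]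
      have heq : {p : ℝ × Ω | ¬ p.1 ∈ Ioo u v} = ((Ioo u v)ᶜ) ×ˢ (univ : Set Ω) := by
        ext p; simp
      rw [heq, Measure.prod_prod]
      have : μ ((Ioo u v)ᶜ) = 0 := by
        rw [hμdef, Measure.restrict_apply measurableSet_Ioo.compl]
        simp
      rw [this, zero_mul]
    filter_upwards [hae] with p hp
    rw [norm_mul]
    have hb1 : ‖f' p.1‖ ≤ max C 0 :=
      le_trans (hC p.1 (Ioo_subset_Icc_self hp)) (le_max_left _ _)
    have hb2 : ‖T p.1 p.2‖ ≤ ‖Y p.2‖ := by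
      by_cases h : p.1 < X p.2 ∧ X p.2 ≤ v <;> simp [hTdef, h]
    exact mul_le_mul hb1 hb2 (norm_nonneg _) (le_max_right _ _)
  -- swap
  have hswap : ∫ ω, ∫ a in Ioo u v, f' a * T a ω ∂(volume) ∂Q
      = ∫ a in Ioo u v, ∫ ω, f' a * T a ω ∂Q := by
    exact (integral_integral_swap (f := fun a ω => f' a * T a ω) hHint).symm
  -- inner integral
  have hin : EqOn (fun a => ∫ ω, f' a * T a ω ∂Q) (fun a => f' a * (F a - F v)) (Ioo u v) := by
    intro a ha
    simp only
    rw [integral_const_mul]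
    congr 1
    have heq : (fun ω => T a ω) = (X ⁻¹' Ioc a v).indicator Y := by
      funext ω; by_cases h : a < X ω ∧ X ω ≤ v <;> simp [hTdef, h, Set.indicator_apply, mem_Ioc]
    rw [heq, integral_indicator (hXm measurableSet_Ioc)]
    have hsplit : {ω | a < X ω} = X ⁻¹' Ioc a v ∪ {ω | v < X ω} := by
      ext ω
      simp only [mem_setOf_eq, mem_union, mem_preimage, mem_Ioc]
      constructor
      · intro h; rcases le_or_gt (X ω) v with h2 | h2
        · exact Or.inl ⟨h, h2⟩
        · exact Or.inr h2
      · rintro (⟨h, _⟩ | h)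
        · exact h
        · exact lt_trans ha.2 h
    have hFa : F a = (∫ ω in X ⁻¹' Ioc a v, Y ω ∂Q) + ∫ ω in {ω | v < X ω}, Y ω ∂Q := by
      rw [hFdef]
      simp only
      rw [hsplit]
      apply setIntegral_union
      · exact Set.disjoint_left.mpr fun ω h1 h2 => absurd h1.2 (not_le.mpr h2)
      · exact hXm measurableSet_Ioi
      · exact hY.integrableOn
      · exact hY.integrableOn
    have hFv : F v = ∫ ω in {ω | v < X ω}, Y ω ∂Q := rfl
    rw [hFa, hFv]; ring
  -- compute integral of second term
  have hterm2 : ∫ ω, (∫ a in Ioo u v, f' a * T a ω) ∂Q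
      = (∫ a in Ioo u v, f' a * F a) - (f v - f u) * F v := by
    rw [hswap, setIntegral_congr_fun measurableSet_Ioo hin]
    have hfint' : IntegrableOn (fun a => f' a * F a) (Ioo u v) :=
      hf'int.mono_set (Ioo_subset_Ioo (le_of_lt hαu) (le_of_lt hvβ))
    have hfint'' : IntegrableOn (fun a => f' a * F v) (Ioo u v) :=
      (((hf'c.mono hIccIoo).integrableOn_Icc).mono_set Ioo_subset_Icc_self).mul_const (F v)
    simp only [mul_sub]
    rw [integral_sub hfint' hfint'', integral_mul_const, hftc v ⟨huv', le_refl v⟩]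
  -- compute integral of first term
  have hterm1 : ∫ ω, (X ⁻¹' Icc u v).indicator (fun ω' => f u * Y ω') ω ∂Q
      = f u * ((∫ ω in {ω | u ≤ X ω}, Y ω ∂Q) - F v) := by
    rw [integral_indicator hmeasIcc, integral_const_mul]
    congr 1
    have hsplit : {ω | u ≤ X ω} = X ⁻¹' Icc u v ∪ {ω | v < X ω} := by
      ext ω
      simp only [mem_setOf_eq, mem_union, mem_preimage, mem_Icc]
      constructor
      · intro h; rcases le_or_gt (X ω) v with h2 | h2
        · exact Or.inl ⟨h, h2⟩
        · exact Or.inr h2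
      · rintro (⟨h, _⟩ | h)
        · exact h
        · exact le_of_lt (lt_of_lt_of_le huv (le_of_lt h))
    have : (∫ ω in {ω | u ≤ X ω}, Y ω ∂Q)
        = (∫ ω in X ⁻¹' Icc u v, Y ω ∂Q) + ∫ ω in {ω | v < X ω}, Y ω ∂Q := by
      rw [hsplit]
      apply setIntegral_union
      · exact Set.disjoint_left.mpr fun ω h1 h2 => absurd h1.2 (not_le.mpr h2)
      · exact hXm measurableSet_Ioi
      · exact hY.integrableOn
      · exact hY.integrableOn
    have hFv : F v = ∫ ω in {ω | v < X ω}, Y ω ∂Q := rfl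
    rw [this, hFv]
    ring
  -- assemble
  have hgoal1 : (∫ a in Set.Ioo u v, f' a * ∫ ω in {ω | a < X ω}, Y ω ∂Q)
      = ∫ a in Ioo u v, f' a * F a := rfl
  have hgoal2 : (∫ ω in {ω | v < X ω}, Y ω ∂Q) = F v := rfl
  rw [hgoal1, hgoal2]
  calc ∫ ω, Set.indicator (Set.Icc u v) f (X ω) * Y ω ∂Q
      = ∫ ω, (Set.indicator (X ⁻¹' Icc u v) (fun ω' => f u * Y ω') ω
          + ∫ a in Ioo u v, f' a * T a ω) ∂Q :=
        integral_congr_ae (Filter.Eventually.of_forall hpt)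
    _ = (∫ ω, Set.indicator (X ⁻¹' Icc u v) (fun ω' => f u * Y ω') ω ∂Q)
          + ∫ ω, (∫ a in Ioo u v, f' a * T a ω) ∂Q := integral_add hint1 hint2
    _ = f u * (∫ ω in {ω | u ≤ X ω}, Y ω ∂Q) - f v * F v
          + ∫ a in Ioo u v, f' a * F a := by
        rw [hterm1, hterm2]; ring

theorem stmt8 {Ω : Type*} [MeasurableSpace Ω] (Q : Measure Ω) [IsProbabilityMeasure Q]
    (X Y : Ω → ℝ) (hXm : Measurable X) (hXpos : ∀ ω, 0 ≤ X ω) (hY : Integrable Y Q)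
    (α β : ℝ) (hα : 0 ≤ α) (hαβ : α < β)
    (f f' : ℝ → ℝ) (hfc : ContinuousOn f (Set.Icc α β))
    (hfd : ∀ x ∈ Set.Ioo α β, HasDerivAt f (f' x) x)
    (hf'c : ContinuousOn f' (Set.Ioo α β))
    (hgint : Integrable (fun ω => Set.indicator (Set.Icc α β) f (X ω) * Y ω) Q)
    (hf'int : IntegrableOn (fun a => f' a * ∫ ω in {ω | a < X ω}, Y ω ∂Q) (Set.Ioo α β)) :
    ∫ ω, Set.indicator (Set.Icc α β) f (X ω) * Y ω ∂Q =
      f α * (∫ ω in {ω | α ≤ X ω}, Y ω ∂Q) - f β * (∫ ω in {ω | β < X ω}, Y ω ∂Q) +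
        ∫ a in Set.Ioo α β, f' a * ∫ ω in {ω | a < X ω}, Y ω ∂Q := by
  set d : ℝ := (β - α) / 3 with hd_def
  have hd : 0 < d := by rw [hd_def]; linarith
  set u : ℕ → ℝ := fun n => α + d / (n + 1) with hu_def
  set v : ℕ → ℝ := fun n => β - d / (n + 1) with hv_def
  have hdn : ∀ n : ℕ, 0 < d / ((n : ℝ) + 1) := fun n => by positivity
  have hdn' : ∀ n : ℕ, d / ((n : ℝ) + 1) ≤ d := by
    intro n
    rw [div_le_iff₀ (by positivity)]
    nlinarith [show (0:ℝ) ≤ (n:ℝ) from Nat.cast_nonneg n]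
  have hαu : ∀ n, α < u n := fun n => by simp only [hu_def]; linarith [hdn n]
  have huv : ∀ n, u n < v n := by
    intro n; simp only [hu_def, hv_def]
    have h1 := hdn' n
    rw [hd_def] at *
    linarith
  have hvβ : ∀ n, v n < β := fun n => by simp only [hv_def]; linarith [hdn n]
  have hu_anti : Antitone u := by
    intro n m hnm
    simp only [hu_def]
    have : ((n:ℝ)+1) ≤ ((m:ℝ)+1) := by exact_mod_cast Nat.succ_le_succ hnm
    gcongr
  have hv_mono : Monotone v := by
    intro n m hnm
    simp only [hv_def]
    have : ((n:ℝ)+1) ≤ ((m:ℝ)+1) := by exact_mod_cast Nat.succ_le_succ hnm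
    gcongr
  have hdiv_tend : Tendsto (fun n : ℕ => d / ((n : ℝ) + 1)) atTop (nhds 0) := by
    have h0 := tendsto_one_div_add_atTop_nhds_zero_nat.const_mul d
    simp only [mul_zero] at h0
    refine h0.congr fun n => ?_
    rw [mul_one_div]
  have hu_tend : Tendsto u atTop (nhds α) := by
    have := tendsto_const_nhds (x := α) (f := atTop (α := ℕ)) |>.add hdiv_tend
    rw [add_zero] at this
    exact this
  have hv_tend : Tendsto v atTop (nhds β) := by
    have := tendsto_const_nhds (x := β) (f := atTop (α := ℕ)) |>.sub hdiv_tend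
    rw [sub_zero] at this
    exact this
  -- core identity for each n
  have hcore : ∀ n : ℕ,
      ∫ ω, Set.indicator (Set.Icc (u n) (v n)) f (X ω) * Y ω ∂Q =
        f (u n) * (∫ ω in {ω | u n ≤ X ω}, Y ω ∂Q)
          - f (v n) * (∫ ω in {ω | v n < X ω}, Y ω ∂Q) +
          ∫ a in Set.Ioo (u n) (v n), f' a * ∫ ω in {ω | a < X ω}, Y ω ∂Q :=
    fun n => core Q X Y hXm hY α β f f' hfc hfd hf'c hgint hf'int (u n) (v n)
      (hαu n) (huv n) (hvβ n)
  -- limits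
  have hsubIcc : ∀ n, Icc (u n) (v n) ⊆ Icc α β := fun n =>
    Icc_subset_Icc (le_of_lt (hαu n)) (le_of_lt (hvβ n))
  -- (i)
  have hlim1 : Tendsto (fun n => ∫ ω, Set.indicator (Set.Icc (u n) (v n)) f (X ω) * Y ω ∂Q)
      atTop (nhds (∫ ω, Set.indicator (Set.Ioo α β) f (X ω) * Y ω ∂Q)) := by
    apply tendsto_integral_of_dominated_convergence
      (fun ω => ‖Set.indicator (Set.Icc α β) f (X ω) * Y ω‖)
    · intro n
      have heq : (fun ω => Set.indicator (Set.Icc (u n) (v n)) f (X ω) * Y ω)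
          = (X ⁻¹' Icc (u n) (v n)).indicator
            (fun ω => Set.indicator (Set.Icc α β) f (X ω) * Y ω) := by
        funext ω; by_cases h : X ω ∈ Icc (u n) (v n)
        · simp [Set.indicator_of_mem h, Set.indicator_of_mem (hsubIcc n h),
            Set.indicator_of_mem (show ω ∈ X ⁻¹' Icc (u n) (v n) from h)]
        · simp [Set.indicator_of_notMem h,
            Set.indicator_of_notMem (show ω ∉ X ⁻¹' Icc (u n) (v n) from h)]
      rw [heq]
      exact (hgint.indicator (hXm measurableSet_Icc)).1
    · exact hgint.norm
    · intro n
      refine Filter.Eventually.of_forall fun ω => ?_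
      by_cases h : X ω ∈ Icc (u n) (v n)
      · rw [Set.indicator_of_mem h, Set.indicator_of_mem (hsubIcc n h)]
      · rw [Set.indicator_of_notMem h]
        simp only [zero_mul, norm_zero]
        positivity
    · refine Filter.Eventually.of_forall fun ω => ?_
      by_cases h : X ω ∈ Ioo α β
      · have h1 : ∀ᶠ n in atTop, u n < X ω := hu_tend.eventually_lt_const h.1
        have h2 : ∀ᶠ n in atTop, X ω < v n := hv_tend.eventually_const_lt h.2
        refine Tendsto.congr' ?_ (tendsto_const_nhds (x := (Ioo α β).indicator f (X ω) * Y ω))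
        filter_upwards [h1, h2] with n hn1 hn2
        simp only [Set.indicator_of_mem h,
          Set.indicator_of_mem (show X ω ∈ Icc (u n) (v n) from ⟨le_of_lt hn1, le_of_lt hn2⟩)]
      · have hz : ∀ n : ℕ, X ω ∉ Icc (u n) (v n) := by
          intro n hc
          rcases not_and_or.mp ((mem_Ioo (a := α) (b := β)).not.mp h)  with h' | h'
          · push_neg at h'; exact absurd (lt_of_lt_of_le (hαu n) hc.1) (not_lt.mpr h')
          · push_neg at h'; exact absurd (lt_of_le_of_lt hc.2 (hvβ n)) (not_lt.mpr h')
        simp only [Set.indicator_of_notMem h, Set.indicator_of_notMem (hz _), zero_mul]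
        exact tendsto_const_nhds
  -- (ii), (iv): continuity of f at endpoints
  have hfu : Tendsto (fun n => f (u n)) atTop (nhds (f α)) := by
    have hcw : ContinuousWithinAt f (Icc α β) α := hfc α ⟨le_refl α, le_of_lt hαβ⟩
    apply hcw.tendsto.comp
    rw [tendsto_nhdsWithin_iff]
    exact ⟨hu_tend, Filter.Eventually.of_forall fun n =>
      ⟨le_of_lt (hαu n), le_of_lt (lt_trans (huv n) (hvβ n))⟩⟩
  have hfv : Tendsto (fun n => f (v n)) atTop (nhds (f β)) := by
    have hcw : ContinuousWithinAt f (Icc α β) β := hfc β ⟨le_of_lt hαβ, le_refl β⟩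
    apply hcw.tendsto.comp
    rw [tendsto_nhdsWithin_iff]
    exact ⟨hv_tend, Filter.Eventually.of_forall fun n =>
      ⟨le_of_lt (lt_trans (hαu n) (huv n)), le_of_lt (hvβ n)⟩⟩
  -- (iii)
  have hlim3 : Tendsto (fun n => ∫ ω in {ω | u n ≤ X ω}, Y ω ∂Q) atTop
      (nhds (∫ ω in {ω | α < X ω}, Y ω ∂Q)) := by
    have hrw : ∀ n, (∫ ω in {ω | u n ≤ X ω}, Y ω ∂Q)
        = ∫ ω, (X ⁻¹' Ici (u n)).indicator Y ω ∂Q := fun n =>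
      (integral_indicator (hXm measurableSet_Ici)).symm
    have hrw2 : (∫ ω in {ω | α < X ω}, Y ω ∂Q) = ∫ ω, (X ⁻¹' Ioi α).indicator Y ω ∂Q :=
      (integral_indicator (hXm measurableSet_Ioi)).symm
    simp only [hrw, hrw2]
    apply tendsto_integral_of_dominated_convergence (fun ω => ‖Y ω‖)
    · exact fun n => (hY.indicator (hXm measurableSet_Ici)).1
    · exact hY.norm
    · exact fun n => Filter.Eventually.of_forall fun ω => norm_indicator_le_norm_self _ _
    · refine Filter.Eventually.of_forall fun ω => ?_
      by_cases h : α < X ω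
      · have h1 : ∀ᶠ n in atTop, u n < X ω := hu_tend.eventually_lt_const h
        refine Tendsto.congr' ?_ (tendsto_const_nhds (x := (X ⁻¹' Ioi α).indicator Y ω))
        filter_upwards [h1] with n hn
        simp only [Set.indicator_of_mem (show ω ∈ X ⁻¹' Ioi α from h),
          Set.indicator_of_mem (show ω ∈ X ⁻¹' Ici (u n) from le_of_lt hn)]
      · have hz : ∀ n : ℕ, ω ∉ X ⁻¹' Ici (u n) := by
          intro n hc
          exact h (lt_of_lt_of_le (hαu n) hc)
        simp only [Set.indicator_of_notMem (show ω ∉ X ⁻¹' Ioi α from h),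
          Set.indicator_of_notMem (hz _)]
        exact tendsto_const_nhds
  -- (v)
  have hlim5 : Tendsto (fun n => ∫ ω in {ω | v n < X ω}, Y ω ∂Q) atTop
      (nhds (∫ ω in {ω | β ≤ X ω}, Y ω ∂Q)) := by
    have hrw : ∀ n, (∫ ω in {ω | v n < X ω}, Y ω ∂Q)
        = ∫ ω, (X ⁻¹' Ioi (v n)).indicator Y ω ∂Q := fun n =>
      (integral_indicator (hXm measurableSet_Ioi)).symm
    have hrw2 : (∫ ω in {ω | β ≤ X ω}, Y ω ∂Q) = ∫ ω, (X ⁻¹' Ici β).indicator Y ω ∂Q :=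
      (integral_indicator (hXm measurableSet_Ici)).symm
    simp only [hrw, hrw2]
    apply tendsto_integral_of_dominated_convergence (fun ω => ‖Y ω‖)
    · exact fun n => (hY.indicator (hXm measurableSet_Ioi)).1
    · exact hY.norm
    · exact fun n => Filter.Eventually.of_forall fun ω => norm_indicator_le_norm_self _ _
    · refine Filter.Eventually.of_forall fun ω => ?_
      by_cases h : β ≤ X ω
      · have h1 : ∀ n : ℕ, ω ∈ X ⁻¹' Ioi (v n) := fun n => lt_of_lt_of_le (hvβ n) h
        refine Tendsto.congr' ?_ (tendsto_const_nhds (x := (X ⁻¹' Ici β).indicator Y ω))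
        refine Filter.Eventually.of_forall fun n => ?_
        simp only [Set.indicator_of_mem (show ω ∈ X ⁻¹' Ici β from h),
          Set.indicator_of_mem (h1 n)]
      · push_neg at h
        have h1 : ∀ᶠ n in atTop, X ω < v n := hv_tend.eventually_const_lt h
        refine Tendsto.congr' ?_ (tendsto_const_nhds (x := (X ⁻¹' Ici β).indicator Y ω))
        filter_upwards [h1] with n hn
        simp only [Set.indicator_of_notMem (show ω ∉ X ⁻¹' Ici β from not_le.mpr h),
          Set.indicator_of_notMem (show ω ∉ X ⁻¹' Ioi (v n) from not_lt.mpr (le_of_lt hn))]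
  -- (vi)
  have hunion : (⋃ n : ℕ, Ioo (u n) (v n)) = Ioo α β := by
    ext x
    simp only [mem_iUnion, mem_Ioo]
    constructor
    · rintro ⟨n, h1, h2⟩
      exact ⟨lt_trans (hαu n) h1, lt_trans h2 (hvβ n)⟩
    · rintro ⟨h1, h2⟩
      have e1 : ∀ᶠ n in atTop, u n < x := hu_tend.eventually_lt_const h1
      have e2 : ∀ᶠ n in atTop, x < v n := hv_tend.eventually_const_lt h2
      obtain ⟨n, hn1, hn2⟩ := (e1.and e2).exists
      exact ⟨n, hn1, hn2⟩
  have hlim6 : Tendsto (fun n => ∫ a in Set.Ioo (u n) (v n),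
        f' a * ∫ ω in {ω | a < X ω}, Y ω ∂Q) atTop
      (nhds (∫ a in Set.Ioo α β, f' a * ∫ ω in {ω | a < X ω}, Y ω ∂Q)) := by
    have := tendsto_setIntegral_of_monotone (s := fun n => Ioo (u n) (v n))
      (f := fun a => f' a * ∫ ω in {ω | a < X ω}, Y ω ∂Q)
      (fun n => measurableSet_Ioo)
      (fun n m hnm => Ioo_subset_Ioo (hu_anti hnm) (hv_mono hnm))
      (by rw [hunion]; exact hf'int)
    rwa [hunion] at this
  -- combine
  have hRlim : Tendsto (fun n =>
      f (u n) * (∫ ω in {ω | u n ≤ X ω}, Y ω ∂Q)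
        - f (v n) * (∫ ω in {ω | v n < X ω}, Y ω ∂Q) +
        ∫ a in Set.Ioo (u n) (v n), f' a * ∫ ω in {ω | a < X ω}, Y ω ∂Q) atTop
      (nhds (f α * (∫ ω in {ω | α < X ω}, Y ω ∂Q)
        - f β * (∫ ω in {ω | β ≤ X ω}, Y ω ∂Q) +
        ∫ a in Set.Ioo α β, f' a * ∫ ω in {ω | a < X ω}, Y ω ∂Q)) :=
    ((hfu.mul hlim3).sub (hfv.mul hlim5)).add hlim6
  have hmain : ∫ ω, Set.indicator (Set.Ioo α β) f (X ω) * Y ω ∂Q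
      = f α * (∫ ω in {ω | α < X ω}, Y ω ∂Q)
        - f β * (∫ ω in {ω | β ≤ X ω}, Y ω ∂Q) +
        ∫ a in Set.Ioo α β, f' a * ∫ ω in {ω | a < X ω}, Y ω ∂Q := by
    apply tendsto_nhds_unique hlim1
    exact (Filter.Tendsto.congr (fun n => (hcore n).symm)) hRlim
  -- endpoint atoms
  have hptE : ∀ ω, Set.indicator (Set.Icc α β) f (X ω) * Y ω
      = Set.indicator (Set.Ioo α β) f (X ω) * Y ω
        + (X ⁻¹' {α}).indicator (fun ω' => f α * Y ω') ω
        + (X ⁻¹' {β}).indicator (fun ω' => f β * Y ω') ω := by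
    intro ω
    have hA : (X ⁻¹' {α}).indicator (fun ω' => f α * Y ω') ω
        = if X ω = α then f α * Y ω else 0 := by
      by_cases h : X ω = α <;> simp [Set.indicator_apply, mem_preimage, h]
    have hB : (X ⁻¹' {β}).indicator (fun ω' => f β * Y ω') ω
        = if X ω = β then f β * Y ω else 0 := by
      by_cases h : X ω = β <;> simp [Set.indicator_apply, mem_preimage, h]
    rcases eq_or_ne (X ω) α with h1 | h1
    · rw [hA, hB, if_pos h1, if_neg (fun hc => ne_of_lt hαβ (h1.symm.trans hc)),
        Set.indicator_of_mem (show X ω ∈ Icc α β from by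
          rw [h1]; exact ⟨le_refl _, le_of_lt hαβ⟩),
        Set.indicator_of_notMem (show X ω ∉ Ioo α β from by
          rw [h1]; exact fun hc => lt_irrefl α hc.1), h1]
      ring
    rcases eq_or_ne (X ω) β with h2 | h2
    · rw [hA, hB, if_neg h1, if_pos h2,
        Set.indicator_of_mem (show X ω ∈ Icc α β from by
          rw [h2]; exact ⟨le_of_lt hαβ, le_refl _⟩),
        Set.indicator_of_notMem (show X ω ∉ Ioo α β from by
          rw [h2]; exact fun hc => lt_irrefl β hc.2), h2]
      ring
    by_cases h3 : X ω ∈ Icc α β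
    · rw [hA, hB, if_neg h1, if_neg h2, Set.indicator_of_mem h3,
        Set.indicator_of_mem (show X ω ∈ Ioo α β from
          ⟨lt_of_le_of_ne h3.1 (Ne.symm h1), lt_of_le_of_ne h3.2 h2⟩)]
      ring
    · rw [hA, hB, if_neg h1, if_neg h2, Set.indicator_of_notMem h3,
        Set.indicator_of_notMem (fun hc => h3 (Ioo_subset_Icc_self hc))]
      ring
  have hint_Ioo : Integrable (fun ω => Set.indicator (Set.Ioo α β) f (X ω) * Y ω) Q := by
    have heq : (fun ω => Set.indicator (Set.Ioo α β) f (X ω) * Y ω)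
        = (X ⁻¹' Ioo α β).indicator (fun ω => Set.indicator (Set.Icc α β) f (X ω) * Y ω) := by
      funext ω; by_cases h : X ω ∈ Ioo α β
      · simp [Set.indicator_of_mem h, Set.indicator_of_mem (Ioo_subset_Icc_self h),
          Set.indicator_of_mem (show ω ∈ X ⁻¹' Ioo α β from h)]
      · simp [Set.indicator_of_notMem h,
          Set.indicator_of_notMem (show ω ∉ X ⁻¹' Ioo α β from h)]
    rw [heq]; exact hgint.indicator (hXm measurableSet_Ioo)
  have hintA : Integrable ((X ⁻¹' {α}).indicator (fun ω => f α * Y ω)) Q :=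
    (hY.const_mul (f α)).indicator (hXm (measurableSet_singleton α))
  have hintB : Integrable ((X ⁻¹' {β}).indicator (fun ω => f β * Y ω)) Q :=
    (hY.const_mul (f β)).indicator (hXm (measurableSet_singleton β))
  have hsplitE : ∫ ω, Set.indicator (Set.Icc α β) f (X ω) * Y ω ∂Q
      = (∫ ω, Set.indicator (Set.Ioo α β) f (X ω) * Y ω ∂Q)
        + (∫ ω, (X ⁻¹' {α}).indicator (fun ω' => f α * Y ω') ω ∂Q)
        + (∫ ω, (X ⁻¹' {β}).indicator (fun ω' => f β * Y ω') ω ∂Q) := by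
    have hAB : Integrable (fun ω => Set.indicator (Set.Ioo α β) f (X ω) * Y ω
        + (X ⁻¹' {α}).indicator (fun ω' => f α * Y ω') ω) Q := hint_Ioo.add hintA
    rw [integral_congr_ae (Filter.Eventually.of_forall hptE),
      integral_add hAB hintB, integral_add hint_Ioo hintA]
  have hEα : (∫ ω in {ω | α ≤ X ω}, Y ω ∂Q)
      = (∫ ω in X ⁻¹' {α}, Y ω ∂Q) + ∫ ω in {ω | α < X ω}, Y ω ∂Q := by
    have hs : {ω | α ≤ X ω} = X ⁻¹' {α} ∪ {ω | α < X ω} := by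
      ext ω; simp only [mem_setOf_eq, mem_union, mem_preimage, mem_singleton_iff]
      constructor
      · intro h
        rcases eq_or_lt_of_le h with h2 | h2
        · exact Or.inl h2.symm
        · exact Or.inr h2
      · rintro (h | h)
        · exact le_of_eq h.symm
        · exact le_of_lt h
    rw [hs]
    apply setIntegral_union
    · refine Set.disjoint_left.mpr fun ω h1 h2 => ?_
      rw [mem_preimage, mem_singleton_iff] at h1
      rw [mem_setOf_eq, h1] at h2
      exact lt_irrefl α h2
    · exact hXm measurableSet_Ioi
    · exact hY.integrableOn
    · exact hY.integrableOn
  have hEβ : (∫ ω in {ω | β ≤ X ω}, Y ω ∂Q)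
      = (∫ ω in X ⁻¹' {β}, Y ω ∂Q) + ∫ ω in {ω | β < X ω}, Y ω ∂Q := by
    have hs : {ω | β ≤ X ω} = X ⁻¹' {β} ∪ {ω | β < X ω} := by
      ext ω; simp only [mem_setOf_eq, mem_union, mem_preimage, mem_singleton_iff]
      constructor
      · intro h
        rcases eq_or_lt_of_le h with h2 | h2
        · exact Or.inl h2.symm
        · exact Or.inr h2
      · rintro (h | h)
        · exact le_of_eq h.symm
        · exact le_of_lt h
    rw [hs]
    apply setIntegral_union
    · refine Set.disjoint_left.mpr fun ω h1 h2 => ?_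
      rw [mem_preimage, mem_singleton_iff] at h1
      rw [mem_setOf_eq, h1] at h2
      exact lt_irrefl β h2
    · exact hXm measurableSet_Ioi
    · exact hY.integrableOn
    · exact hY.integrableOn
  rw [hsplitE, hmain, integral_indicator (hXm (measurableSet_singleton α)),
    integral_indicator (hXm (measurableSet_singleton β)), integral_const_mul, integral_const_mul,
    hEα, hEβ]
  ring
end

section
/- Let X₁, X₂ be nonnegative integrable random variables and K₁, K₂, K ≥ 0. Then E[((X₁-K₁)^+ + (X₂-K₂)^+ - K)^+] = ∫_{K₁+K}^∞ Q(X₁ > z) dz + ∫_{K₂+K}^∞ Q(X₂ > z) dz + ∫_{K₂}^{K₂+K} Q(X₂ > z ∧ X₁ > K₁ + K₂ + K - z) dz. -/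
open MeasureTheory Filter Set

set_option maxHeartbeats 3000000 in
private lemma stmt12_ptwise (x y K₁ K₂ K : ℝ) (hK : 0 ≤ K) :
    max (max (x - K₁) 0 + max (y - K₂) 0 - K) 0 =
      max (x - (K₁ + K)) 0 + max (y - (K₂ + K)) 0 +
        max (min y (K₂ + K) - max (K₁ + K₂ + K - x) K₂) 0 := by
  simp only [max_def, min_def]
  split_ifs <;> linarith

private lemma stmt12_tail {Ω : Type*} [MeasurableSpace Ω] (Q : Measure Ω)
    [IsProbabilityMeasure Q] (X : Ω → ℝ) (hint : Integrable X Q) (c : ℝ) :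
    ∫ ω, max (X ω - c) 0 ∂Q = ∫ z in Set.Ioi c, (Q {ω | z < X ω}).toReal := by
  have hfint : Integrable (fun ω => max (X ω - c) 0) Q :=
    (hint.sub (integrable_const c)).pos_part
  rw [hfint.integral_eq_integral_meas_lt (Eventually.of_forall fun ω => le_max_right _ _)]
  have h1 : ∀ t ∈ Set.Ioi (0:ℝ),
      (Q {a | t < max (X a - c) 0}).toReal = (Q {ω | t + c < X ω}).toReal := by
    intro t ht
    congr 2
    ext a
    simp only [Set.mem_setOf_eq, lt_max_iff, Set.mem_Ioi] at *
    constructor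
    · rintro (h | h) <;> [linarith; linarith]
    · intro h; left; linarith
  simp only [measureReal_def]
  rw [setIntegral_congr_fun measurableSet_Ioi h1]
  set g : ℝ → ℝ := fun z => (Q {ω | z < X ω}).toReal with hg
  calc ∫ t in Set.Ioi 0, g (t + c)
      = ∫ t, (Set.Ioi c).indicator g (t + c) := by
        rw [← integral_indicator measurableSet_Ioi]
        congr 1
        ext t
        by_cases h : 0 < t
        · rw [Set.indicator_of_mem (Set.mem_Ioi.2 h),
            Set.indicator_of_mem (Set.mem_Ioi.2 (by linarith))]
        · rw [Set.indicator_of_notMem (fun hh => h (Set.mem_Ioi.1 hh)),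
            Set.indicator_of_notMem (fun hh => h (by have := Set.mem_Ioi.1 hh; linarith))]
    _ = ∫ z, (Set.Ioi c).indicator g z := integral_add_right_eq_self _ c
    _ = ∫ z in Set.Ioi c, g z := integral_indicator measurableSet_Ioi

private lemma stmt12_third {Ω : Type*} [MeasurableSpace Ω] (Q : Measure Ω)
    [IsProbabilityMeasure Q]
    (X₁ X₂ : Ω → ℝ) (h1m : Measurable X₁) (h2m : Measurable X₂) (a b C : ℝ) :
    ∫ z in Set.Ioo a b, (Q {ω | z < X₂ ω ∧ C - z < X₁ ω}).toReal =
      ∫ ω, max (min (X₂ ω) b - max (C - X₁ ω) a) 0 ∂Q := by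
  set B : Set (ℝ × Ω) := {p | p.1 < X₂ p.2 ∧ C - p.1 < X₁ p.2} with hBdef
  have hB : MeasurableSet B :=
    (measurableSet_lt measurable_fst (h2m.comp measurable_snd)).inter
      (measurableSet_lt (measurable_const.sub measurable_fst) (h1m.comp measurable_snd))
  set μ : Measure ℝ := volume.restrict (Set.Ioo a b) with hμ
  haveI : IsFiniteMeasure μ := ⟨by
    rw [hμ, Measure.restrict_apply_univ]; exact measure_Ioo_lt_top⟩
  set F : ℝ → Ω → ℝ := fun z ω => B.indicator (fun _ => (1:ℝ)) (z, ω) with hF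
  have hFint : Integrable (Function.uncurry F) (μ.prod Q) := by
    have : Function.uncurry F = B.indicator (fun _ => (1:ℝ)) := rfl
    rw [this]
    exact (integrable_const (1:ℝ)).indicator hB
  have hswap := MeasureTheory.integral_integral_swap hFint
  have hleft : ∀ z : ℝ, ∫ ω, F z ω ∂Q = (Q {ω | z < X₂ ω ∧ C - z < X₁ ω}).toReal := by
    intro z
    have hmeq : ∀ ω, F z ω = ({ω | z < X₂ ω ∧ C - z < X₁ ω} : Set Ω).indicator (fun _ => (1:ℝ)) ω := by
      intro ω
      simp only [hF, Set.indicator, Set.mem_setOf_eq, hBdef]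
    simp_rw [hmeq]
    exact integral_indicator_one (show MeasurableSet {ω | z < X₂ ω ∧ C - z < X₁ ω} from
      (measurableSet_lt measurable_const h2m).inter (measurableSet_lt measurable_const h1m))
  have hright : ∀ ω : Ω, ∫ z, F z ω ∂μ = max (min (X₂ ω) b - max (C - X₁ ω) a) 0 := by
    intro ω
    have hmeq : ∀ z, F z ω = (Set.Ioo (C - X₁ ω) (X₂ ω)).indicator (fun _ => (1:ℝ)) z := by
      intro z
      simp only [hF, Set.indicator, Set.mem_setOf_eq, hBdef, Set.mem_Ioo]
      congr 1
      simp only [eq_iff_iff]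
      constructor
      · rintro ⟨h1, h2⟩; exact ⟨by linarith, h1⟩
      · rintro ⟨h1, h2⟩; exact ⟨h2, by linarith⟩
    simp_rw [hmeq]
    rw [hμ, setIntegral_indicator measurableSet_Ioo, setIntegral_const,
      Set.Ioo_inter_Ioo, Real.volume_real_Ioo, smul_eq_mul, mul_one]
    congr 1
    rw [min_comm, max_comm]
  calc ∫ z in Set.Ioo a b, (Q {ω | z < X₂ ω ∧ C - z < X₁ ω}).toReal
      = ∫ z, ∫ ω, F z ω ∂Q ∂μ := by
        rw [hμ]; exact (setIntegral_congr_fun measurableSet_Ioo fun z _ => (hleft z).symm)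
    _ = ∫ ω, ∫ z, F z ω ∂μ ∂Q := hswap
    _ = ∫ ω, max (min (X₂ ω) b - max (C - X₁ ω) a) 0 ∂Q :=
        integral_congr_ae (Eventually.of_forall hright)

theorem stmt12 {Ω : Type*} [MeasurableSpace Ω] (Q : Measure Ω) [IsProbabilityMeasure Q]
    (X₁ X₂ : Ω → ℝ) (h1m : Measurable X₁) (h2m : Measurable X₂)
    (h1pos : ∀ ω, 0 ≤ X₁ ω) (h2pos : ∀ ω, 0 ≤ X₂ ω)
    (h1int : Integrable X₁ Q) (h2int : Integrable X₂ Q)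
    (K₁ K₂ K : ℝ) (hK₁ : 0 ≤ K₁) (hK₂ : 0 ≤ K₂) (hK : 0 ≤ K) :
    ∫ ω, max (max (X₁ ω - K₁) 0 + max (X₂ ω - K₂) 0 - K) 0 ∂Q =
      (∫ z in Set.Ioi (K₁ + K), (Q {ω | z < X₁ ω}).toReal) +
        (∫ z in Set.Ioi (K₂ + K), (Q {ω | z < X₂ ω}).toReal) +
        ∫ z in Set.Ioo K₂ (K₂ + K), (Q {ω | z < X₂ ω ∧ K₁ + K₂ + K - z < X₁ ω}).toReal := by
  have hf1 : Integrable (fun ω => max (X₁ ω - (K₁ + K)) 0) Q :=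
    (h1int.sub (integrable_const _)).pos_part
  have hf2 : Integrable (fun ω => max (X₂ ω - (K₂ + K)) 0) Q :=
    (h2int.sub (integrable_const _)).pos_part
  have hf3 : Integrable
      (fun ω => max (min (X₂ ω) (K₂ + K) - max (K₁ + K₂ + K - X₁ ω) K₂) 0) Q := by
    have h31 : Integrable (fun ω => min (X₂ ω) (K₂ + K)) Q :=
      h2int.inf (integrable_const _)
    have h32 : Integrable (fun ω => max (K₁ + K₂ + K - X₁ ω) K₂) Q :=
      ((integrable_const _).sub h1int).sup (integrable_const _)
    exact (h31.sub h32).pos_part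
  have hf12 : Integrable
      (fun ω => max (X₁ ω - (K₁ + K)) 0 + max (X₂ ω - (K₂ + K)) 0) Q := hf1.add hf2
  calc ∫ ω, max (max (X₁ ω - K₁) 0 + max (X₂ ω - K₂) 0 - K) 0 ∂Q
      = ∫ ω, (max (X₁ ω - (K₁ + K)) 0 + max (X₂ ω - (K₂ + K)) 0 +
          max (min (X₂ ω) (K₂ + K) - max (K₁ + K₂ + K - X₁ ω) K₂) 0) ∂Q :=
        integral_congr_ae (Eventually.of_forall fun ω =>
          stmt12_ptwise (X₁ ω) (X₂ ω) K₁ K₂ K hK)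
    _ = (∫ ω, max (X₁ ω - (K₁ + K)) 0 ∂Q) + (∫ ω, max (X₂ ω - (K₂ + K)) 0 ∂Q) +
          ∫ ω, max (min (X₂ ω) (K₂ + K) - max (K₁ + K₂ + K - X₁ ω) K₂) 0 ∂Q := by
        rw [← integral_add hf1 hf2, ← integral_add hf12 hf3]
    _ = (∫ z in Set.Ioi (K₁ + K), (Q {ω | z < X₁ ω}).toReal) +
          (∫ z in Set.Ioi (K₂ + K), (Q {ω | z < X₂ ω}).toReal) +
          ∫ z in Set.Ioo K₂ (K₂ + K),
            (Q {ω | z < X₂ ω ∧ K₁ + K₂ + K - z < X₁ ω}).toReal := by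
        rw [stmt12_tail Q X₁ h1int (K₁ + K), stmt12_tail Q X₂ h2int (K₂ + K),
          stmt12_third Q X₁ X₂ h1m h2m K₂ (K₂ + K) (K₁ + K₂ + K)]
end

section
/- Let F be a set of nonnegative Borel functions on ℝ₊ⁿ and Q a family of Borel probability measures on ℝ₊ⁿ. Assume that for all n-tuples f₁,...,fₘ ∈ F and all K₁,...,Kₘ ≥ 0, the integral ∫ ∏ᵢ(fᵢ - Kᵢ)^+ dQ exists and is the same for every Q in the family. Then all measures in the family agree on the σ-algebra σ(F) generated by F. Consequently, if g is σ(F)-measurable and Q₀-integrable for some Q₀ in the family, then ∫ g dQ = ∫ g dQ₀ for every Q in the family. -/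
open MeasureTheory Filter Set Topology

abbrev PosOrthant (n : ℕ) := {x : Fin n → ℝ // ∀ i, 0 ≤ x i}

lemma aux_min_one (c t : ℝ) (hc : 0 < c) :
    min 1 (c * max t 0) = c * max t 0 - c * max (t - 1/c) 0 := by
  have h1c : 0 < 1/c := by positivity
  rcases le_total t 0 with h | h
  · rw [max_eq_right h, max_eq_right (by linarith)]
    simp
  · rcases le_total t (1/c) with h2 | h2
    · rw [max_eq_right (by linarith : t - 1/c ≤ 0), max_eq_left h, mul_zero, sub_zero]
      refine min_eq_right ?_
      calc c * t ≤ c * (1/c) := by nlinarith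
        _ = 1 := by field_simp
    · rw [max_eq_left h, max_eq_left (by linarith)]
      have h3 : c * (1/c) = 1 := by field_simp
      have hct : 1 ≤ c * t := by nlinarith
      rw [min_eq_left hct, mul_sub, h3]
      ring

lemma aux_prod_expand (m : ℕ) (c : ℝ) (hc : 0 < c) (a : Fin m → ℝ) :
    ∏ i, min 1 (c * max (a i) 0) =
      ∑ t ∈ Finset.univ.powerset,
        (-1:ℝ)^(m - t.card) * c^m * ∏ i, max (a i - (if i ∈ t then 0 else 1/c)) 0 := by
  classical
  have h1 : (∏ i, min 1 (c * max (a i) 0))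
      = ∏ i, (c * max (a i) 0 + -(c * max (a i - 1/c) 0)) := by
    refine Finset.prod_congr rfl fun i _ => ?_
    rw [aux_min_one c (a i) hc]; ring
  rw [h1, Finset.prod_add]
  refine Finset.sum_congr rfl fun t ht => ?_
  have hneg : (∏ i ∈ Finset.univ \ t, -(c * max (a i - 1/c) 0))
      = (-1:ℝ)^((Finset.univ \ t).card) * ∏ i ∈ Finset.univ \ t, (c * max (a i - 1/c) 0) := by
    rw [← Finset.prod_const, ← Finset.prod_mul_distrib]
    exact Finset.prod_congr rfl fun i _ => by ring
  rw [hneg]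
  have hcard : (Finset.univ \ t).card = m - t.card := by
    rw [Finset.card_sdiff_of_subset (Finset.subset_univ t), Finset.card_univ, Fintype.card_fin]
  have hsplit : (∏ i, max (a i - (if i ∈ t then 0 else 1/c)) 0)
      = (∏ i ∈ t, max (a i - 0) 0) * ∏ i ∈ Finset.univ \ t, max (a i - 1/c) 0 := by
    have e1 : (∏ i ∈ t, max (a i - 0) 0)
        = ∏ i ∈ t, max (a i - (if i ∈ t then 0 else 1/c)) 0 :=
      Finset.prod_congr rfl fun i hi => by simp [hi]
    have e2 : (∏ i ∈ Finset.univ \ t, max (a i - 1/c) 0)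
        = ∏ i ∈ Finset.univ \ t, max (a i - (if i ∈ t then 0 else 1/c)) 0 :=
      Finset.prod_congr rfl fun i hi => by simp [(Finset.mem_sdiff.1 hi).2]
    rw [e1, e2, ← Finset.prod_union Finset.disjoint_sdiff,
      Finset.union_sdiff_of_subset (Finset.subset_univ t)]
  have hb : (∏ i ∈ t, c * max (a i) 0) = c ^ t.card * ∏ i ∈ t, max (a i - 0) 0 := by
    rw [← Finset.prod_const, ← Finset.prod_mul_distrib]
    exact Finset.prod_congr rfl fun i _ => by rw [sub_zero]
  have hd : (∏ i ∈ Finset.univ \ t, c * max (a i - 1/c) 0)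
      = c ^ (m - t.card) * ∏ i ∈ Finset.univ \ t, max (a i - 1/c) 0 := by
    rw [← hcard, ← Finset.prod_const, ← Finset.prod_mul_distrib]
  have hcm : c ^ t.card * c ^ (m - t.card) = c ^ m := by
    rw [← pow_add, Nat.add_sub_cancel' (by simpa using Finset.card_le_card (Finset.subset_univ t))]
  rw [hb, hd, hcard, hsplit, ← hcm]
  ring

/-- The σ-algebra generated by a family of functions. -/
def stmt16Sig {n : ℕ} (𝓕 : Set (PosOrthant n → ℝ)) : MeasurableSpace (PosOrthant n) :=
  ⨆ f ∈ 𝓕, MeasurableSpace.comap f (inferInstance : MeasurableSpace ℝ)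

set_option maxHeartbeats 1000000 in
theorem stmt16 (n : ℕ) (𝓕 : Set (PosOrthant n → ℝ))
    (h𝓕 : ∀ f ∈ 𝓕, Measurable f ∧ ∀ x, 0 ≤ f x)
    (𝒬 : Set (Measure (PosOrthant n)))
    (hprob : ∀ Q ∈ 𝒬, IsProbabilityMeasure Q)
    (hint : ∀ (m : ℕ) (f : Fin m → (PosOrthant n → ℝ)), (∀ i, f i ∈ 𝓕) →
      ∀ K : Fin m → ℝ, (∀ i, 0 ≤ K i) →
        ∀ Q ∈ 𝒬, Integrable (fun x => ∏ i, max (f i x - K i) 0) Q)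
    (hsame : ∀ (m : ℕ) (f : Fin m → (PosOrthant n → ℝ)), (∀ i, f i ∈ 𝓕) →
      ∀ K : Fin m → ℝ, (∀ i, 0 ≤ K i) →
        ∀ Q₁ ∈ 𝒬, ∀ Q₂ ∈ 𝒬,
          ∫ x, ∏ i, max (f i x - K i) 0 ∂Q₁ = ∫ x, ∏ i, max (f i x - K i) 0 ∂Q₂) :
    (∀ A : Set (PosOrthant n),
        MeasurableSet[⨆ f ∈ 𝓕, MeasurableSpace.comap f (inferInstance : MeasurableSpace ℝ)] A →
        ∀ Q₁ ∈ 𝒬, ∀ Q₂ ∈ 𝒬, Q₁ A = Q₂ A) ∧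
    ∀ g : PosOrthant n → ℝ,
      Measurable[⨆ f ∈ 𝓕, MeasurableSpace.comap f (inferInstance : MeasurableSpace ℝ)] g →
      ∀ Q₀ ∈ 𝒬, Integrable g Q₀ →
        ∀ Q ∈ 𝒬, Integrable g Q ∧ ∫ x, g x ∂Q = ∫ x, g x ∂Q₀ := by
  classical
  have hle : stmt16Sig 𝓕 ≤ (inferInstance : MeasurableSpace (PosOrthant n)) :=
    iSup₂_le fun f hf => (h𝓕 f hf).1.comap_le
  -- the π-system
  set S : Set (Set (PosOrthant n)) := {A | ∃ (m : ℕ) (f : Fin m → (PosOrthant n → ℝ))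
    (K : Fin m → ℝ), (∀ i, f i ∈ 𝓕) ∧ (∀ i, 0 ≤ K i) ∧ A = ⋂ i, {x | K i < f i x}} with hSdef
  have hpi : IsPiSystem S := by
    rintro A ⟨m₁, f₁, K₁, hf₁, hK₁, rfl⟩ B ⟨m₂, f₂, K₂, hf₂, hK₂, rfl⟩ -
    refine ⟨m₁ + m₂, Fin.append f₁ f₂, Fin.append K₁ K₂, ?_, ?_, ?_⟩
    · intro i
      refine Fin.addCases (motive := fun i => Fin.append f₁ f₂ i ∈ 𝓕)
        (fun j => ?_) (fun j => ?_) i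
      · simp only [Fin.append_left]; exact hf₁ j
      · simp only [Fin.append_right]; exact hf₂ j
    · intro i
      refine Fin.addCases (motive := fun i => 0 ≤ Fin.append K₁ K₂ i)
        (fun j => ?_) (fun j => ?_) i
      · simp only [Fin.append_left]; exact hK₁ j
      · simp only [Fin.append_right]; exact hK₂ j
    · ext x
      simp only [mem_inter_iff, mem_iInter, mem_setOf_eq]
      constructor
      · rintro ⟨h1, h2⟩ i
        refine Fin.addCases
          (motive := fun i => Fin.append K₁ K₂ i < Fin.append f₁ f₂ i x)
          (fun j => ?_) (fun j => ?_) i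
        · simp only [Fin.append_left]; exact h1 j
        · simp only [Fin.append_right]; exact h2 j
      · intro h
        constructor
        · intro j
          have := h (Fin.castAdd m₂ j)
          rwa [Fin.append_left, Fin.append_left] at this
        · intro j
          have := h (Fin.natAdd m₁ j)
          rwa [Fin.append_right, Fin.append_right] at this
  -- generateFrom S = stmt16Sig 𝓕
  have hgen : stmt16Sig 𝓕 = MeasurableSpace.generateFrom S := by
    apply le_antisymm
    · refine iSup₂_le (f := fun (f : PosOrthant n → ℝ) (_ : f ∈ 𝓕) =>
        MeasurableSpace.comap f (inferInstance : MeasurableSpace ℝ)) fun f hf => ?_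
      show MeasurableSpace.comap f (inferInstance : MeasurableSpace ℝ) ≤
        MeasurableSpace.generateFrom S
      rw [show (inferInstance : MeasurableSpace ℝ) = borel ℝ from BorelSpace.measurable_eq,
        borel_eq_generateFrom_Ioi ℝ, MeasurableSpace.comap_generateFrom]
      refine MeasurableSpace.generateFrom_le ?_
      rintro A ⟨B, ⟨a, rfl⟩, rfl⟩
      rcases le_or_gt 0 a with ha | ha
      · refine MeasurableSpace.measurableSet_generateFrom
          ⟨1, (fun _ => f), (fun _ => a), (fun _ => hf), (fun _ => ha), ?_⟩
        ext x; simp [mem_iInter]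
      · have huniv : f ⁻¹' Ioi a = univ :=
          eq_univ_of_forall fun x => lt_of_lt_of_le ha ((h𝓕 f hf).2 x)
        rw [huniv]; exact MeasurableSet.univ
    · refine MeasurableSpace.generateFrom_le ?_
      rintro A ⟨m, f, K, hf, hK, rfl⟩
      refine MeasurableSet.iInter fun i => ?_
      have h1 : MeasurableSet[MeasurableSpace.comap (f i) inferInstance] {x | K i < f i x} :=
        ⟨Ioi (K i), measurableSet_Ioi, rfl⟩
      exact (le_iSup₂ (f := fun (g : PosOrthant n → ℝ) (_ : g ∈ 𝓕) =>
        MeasurableSpace.comap g (inferInstance : MeasurableSpace ℝ)) (f i) (hf i)) _ h1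
  -- measures agree on S
  have hSmem : ∀ (m : ℕ) (f : Fin m → (PosOrthant n → ℝ)), (∀ i, f i ∈ 𝓕) →
      ∀ K : Fin m → ℝ, (∀ i, 0 ≤ K i) → ∀ Q₁ ∈ 𝒬, ∀ Q₂ ∈ 𝒬,
      Q₁ (⋂ i, {x | K i < f i x}) = Q₂ (⋂ i, {x | K i < f i x}) := by
    intro m f hf K hK Q₁ hQ₁ Q₂ hQ₂
    haveI := hprob Q₁ hQ₁; haveI := hprob Q₂ hQ₂
    set A : Set (PosOrthant n) := ⋂ i, {x | K i < f i x} with hAdef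
    have hAm : MeasurableSet A :=
      MeasurableSet.iInter fun i => measurableSet_lt measurable_const (h𝓕 _ (hf i)).1
    set F : ℕ → PosOrthant n → ℝ :=
      fun j x => ∏ i, min 1 (((j:ℝ)+1) * max (f i x - K i) 0) with hFdef
    have hFmeas : ∀ j, Measurable (F j) := fun j =>
      Finset.measurable_prod _ fun i _ =>
        measurable_const.min
          (((((h𝓕 _ (hf i)).1).sub measurable_const).max measurable_const).const_mul _)
    have hF01 : ∀ j x, 0 ≤ F j x ∧ F j x ≤ 1 := by
      intro j x
      have hnn : ∀ i : Fin m, (0:ℝ) ≤ min 1 (((j:ℝ)+1) * max (f i x - K i) 0) := fun i =>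
        le_min zero_le_one (mul_nonneg (by positivity) (le_max_right _ _))
      exact ⟨Finset.prod_nonneg fun i _ => hnn i,
        Finset.prod_le_one (fun i _ => hnn i) (fun i _ => min_le_left _ _)⟩
    have hlim : ∀ x, Tendsto (fun j => F j x) atTop (𝓝 (A.indicator (fun _ => (1:ℝ)) x)) := by
      intro x
      by_cases hx : x ∈ A
      · rw [indicator_of_mem hx]
        have h1 : ∀ i : Fin m, ∀ᶠ j : ℕ in atTop, 1 ≤ ((j:ℝ)+1) * max (f i x - K i) 0 := by
          intro i
          have hxi : K i < f i x := by
            have := mem_iInter.1 hx i; simpa using this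
          have hpos : 0 < max (f i x - K i) 0 := lt_max_iff.2 (Or.inl (by linarith))
          have htend : Tendsto (fun j : ℕ => ((j:ℝ)+1) * max (f i x - K i) 0) atTop atTop :=
            (tendsto_atTop_add_const_right atTop 1 (tendsto_natCast_atTop_atTop (R := ℝ))).atTop_mul_const hpos
          exact htend.eventually_ge_atTop 1
        have hall := (eventually_all (ι := Fin m)).2 h1
        refine tendsto_const_nhds.congr' ?_
        filter_upwards [hall] with j hj
        exact (Finset.prod_eq_one fun i _ => min_eq_left (hj i)).symm
      · rw [indicator_of_notMem hx]
        obtain ⟨i, hi⟩ : ∃ i, ¬ K i < f i x := by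
          by_contra hcon; push_neg at hcon; exact hx (mem_iInter.2 fun i => hcon i)
        have hz : ∀ j, F j x = 0 := by
          intro j
          refine Finset.prod_eq_zero (Finset.mem_univ i) ?_
          rw [max_eq_right (by linarith [not_lt.1 hi] : f i x - K i ≤ 0), mul_zero]
          exact min_eq_right zero_le_one
        simp only [hz]
        exact tendsto_const_nhds
    have hDCT : ∀ Q ∈ 𝒬, Tendsto (fun j => ∫ x, F j x ∂Q) atTop (𝓝 ((Q A).toReal)) := by
      intro Q hQ
      haveI := hprob Q hQ
      have h := tendsto_integral_of_dominated_convergence (μ := Q)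
        (F := F) (f := A.indicator (fun _ => (1:ℝ))) (fun _ => (1:ℝ))
        (fun j => (hFmeas j).aestronglyMeasurable)
        (integrable_const 1)
        (fun j => Eventually.of_forall fun x => by
          rw [Real.norm_eq_abs, abs_of_nonneg (hF01 j x).1]; exact (hF01 j x).2)
        (Eventually.of_forall hlim)
      rwa [integral_indicator_const (1:ℝ) hAm, smul_eq_mul, mul_one] at h
    have hEq : ∀ j : ℕ, ∫ x, F j x ∂Q₁ = ∫ x, F j x ∂Q₂ := by
      intro j
      set c : ℝ := (j:ℝ)+1 with hcdef
      have hcpos : 0 < c := by positivity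
      have hK' : ∀ t : Finset (Fin m), ∀ i, 0 ≤ K i + (if i ∈ t then 0 else 1/c) := by
        intro t i
        refine add_nonneg (hK i) ?_
        split_ifs
        · exact le_rfl
        · positivity
      have hexp : ∀ Q ∈ 𝒬, ∫ x, F j x ∂Q = ∑ t ∈ Finset.univ.powerset,
          (-1:ℝ)^(m - t.card) * c^m *
            ∫ x, ∏ i, max (f i x - (K i + (if i ∈ t then 0 else 1/c))) 0 ∂Q := by
        intro Q hQ
        have hpt : ∀ x, F j x = ∑ t ∈ Finset.univ.powerset,
            (-1:ℝ)^(m - t.card) * c^m *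
              ∏ i, max (f i x - (K i + (if i ∈ t then 0 else 1/c))) 0 := by
          intro x
          have := aux_prod_expand m c hcpos (fun i => f i x - K i)
          simpa [sub_sub] using this
        have h2 : ∫ x, F j x ∂Q = ∫ x, (∑ t ∈ Finset.univ.powerset,
            (-1:ℝ)^(m - t.card) * c^m *
              ∏ i, max (f i x - (K i + (if i ∈ t then 0 else 1/c))) 0) ∂Q :=
          integral_congr_ae (Eventually.of_forall fun x => hpt x)
        rw [h2, integral_finset_sum _ (fun t _ =>
          (hint m f hf (fun i => K i + (if i ∈ t then 0 else 1/c)) (hK' t) Q hQ).const_mul _)]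
        exact Finset.sum_congr rfl fun t _ => integral_const_mul _ _
      rw [hexp Q₁ hQ₁, hexp Q₂ hQ₂]
      refine Finset.sum_congr rfl fun t _ => ?_
      congr 1
      exact hsame m f hf (fun i => K i + (if i ∈ t then 0 else 1/c)) (hK' t) Q₁ hQ₁ Q₂ hQ₂
    have h3 : Tendsto (fun j => ∫ x, F j x ∂Q₁) atTop (𝓝 ((Q₂ A).toReal)) := by
      have := hDCT Q₂ hQ₂
      simpa only [hEq] using this
    have hfin := tendsto_nhds_unique (hDCT Q₁ hQ₁) h3
    exact (ENNReal.toReal_eq_toReal_iff' (measure_ne_top Q₁ A) (measure_ne_top Q₂ A)).1 hfin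
  -- part 1 by Dynkin
  have part1 : ∀ A : Set (PosOrthant n), MeasurableSet[stmt16Sig 𝓕] A →
      ∀ Q₁ ∈ 𝒬, ∀ Q₂ ∈ 𝒬, Q₁ A = Q₂ A := by
    intro A hA Q₁ hQ₁ Q₂ hQ₂
    haveI := hprob Q₁ hQ₁; haveI := hprob Q₂ hQ₂
    refine @MeasurableSpace.induction_on_inter _ (stmt16Sig 𝓕) (fun A _ => Q₁ A = Q₂ A) S hgen hpi
      ?_ ?_ ?_ ?_ A hA
    · simp
    · rintro u ⟨m, f, K, hf, hK, rfl⟩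
      exact hSmem m f hf K hK Q₁ hQ₁ Q₂ hQ₂
    · intro u hu h
      rw [measure_compl (hle _ hu) (measure_ne_top _ _),
        measure_compl (hle _ hu) (measure_ne_top _ _), measure_univ, measure_univ, h]
    · intro g hdisj hmeas h
      rw [measure_iUnion hdisj (fun i => hle _ (hmeas i)),
        measure_iUnion hdisj (fun i => hle _ (hmeas i))]
      exact tsum_congr h
  refine ⟨part1, ?_⟩
  intro g hg Q₀ hQ₀ hint₀ Q hQ
  haveI := hprob Q hQ; haveI := hprob Q₀ hQ₀
  have hgs : StronglyMeasurable[stmt16Sig 𝓕] g := hg.stronglyMeasurable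
  have htrim : Q.trim hle = Q₀.trim hle := by
    refine @Measure.ext _ (stmt16Sig 𝓕) _ _ (fun A hA => ?_)
    rw [trim_measurableSet_eq hle hA, trim_measurableSet_eq hle hA]
    exact part1 A hA Q hQ Q₀ hQ₀
  have hint_trim₀ : Integrable g (Q₀.trim hle) := hint₀.trim hle hgs
  have hintQ : Integrable g Q := by
    have h := htrim ▸ hint_trim₀
    exact integrable_of_integrable_trim hle h
  refine ⟨hintQ, ?_⟩
  calc ∫ x, g x ∂Q = ∫ x, g x ∂(Q.trim hle) := integral_trim hle hgs
    _ = ∫ x, g x ∂(Q₀.trim hle) := by rw [htrim]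
    _ = ∫ x, g x ∂Q₀ := (integral_trim hle hgs).symm
end
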